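/- Let μ and ν be σ-finite measures on a measurable space (E,𝓔) with ν ≪ μ and density p(x) = dν/dμ(x), and let κ : E → E be a μ-reversible transform with κ∘κ = id. If ψ : E → E is (μ,κ)-reversible and p(x) = p(κ(x)) and p(x) = p(ψ(x)) for μ-almost every x, then ψ is (ν,κ)-reversible. -/

import Mathlib

open MeasureTheory

/-- A transform `Φ` is `μ`-reversible if `μ(A ∩ Φ⁻¹(B)) = μ(B ∩ Φ⁻¹(A))` for all
measurable `A`, `B`. -/
def MeasRev {E : Type*} [MeasurableSpace E] (μ : Measure E) (Φ : E → E) : Prop :=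
  ∀ A B : Set E, MeasurableSet A → MeasurableSet B → μ (A ∩ Φ ⁻¹' B) = μ (B ∩ Φ ⁻¹' A)

/-- A transform `Φ` is `(μ,κ)`-reversible if `κ ∘ Φ` is `μ`-reversible. -/
def FlipRev {E : Type*} [MeasurableSpace E] (μ : Measure E) (κ Φ : E → E) : Prop :=
  MeasRev μ (κ ∘ Φ)

/-- If `ν ≪ μ` with density `p = dν/dμ`, `ψ` is `(μ,κ)`-reversible and `p` is
a.e. invariant under both `κ` and `ψ`, then `ψ` is `(ν,κ)`-reversible. -/
theorem stmt_5 {E : Type*} [MeasurableSpace E] (μ ν : Measure E)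
    [SigmaFinite μ] [SigmaFinite ν] (hac : ν ≪ μ)
    (κ : E → E) (hκ_meas : Measurable κ) (hκ_bij : Function.Bijective κ)
    (hκκ : κ ∘ κ = id) (hκ_rev : MeasRev μ κ)
    (ψ : E → E) (hψ_meas : Measurable ψ) (hψ_bij : Function.Bijective ψ)
    (hψ : FlipRev μ κ ψ)
    (hpκ : ∀ᵐ x ∂μ, ν.rnDeriv μ (κ x) = ν.rnDeriv μ x)
    (hpψ : ∀ᵐ x ∂μ, ν.rnDeriv μ (ψ x) = ν.rnDeriv μ x) :
    FlipRev ν κ ψ := by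
  set p : E → ENNReal := ν.rnDeriv μ with hp
  have hp_meas : Measurable p := Measure.measurable_rnDeriv ν μ
  set Φ : E → E := κ ∘ ψ with hΦdef
  have hΦ_meas : Measurable Φ := hκ_meas.comp hψ_meas
  -- Φ is μ-measure-preserving
  have hΦpres : ∀ B : Set E, MeasurableSet B → μ (Φ ⁻¹' B) = μ B := by
    intro B hB
    have := hψ Set.univ B MeasurableSet.univ hB
    simpa using this
  have hκpres : ∀ B : Set E, MeasurableSet B → μ (κ ⁻¹' B) = μ B := by
    intro B hB
    have := hκ_rev Set.univ B MeasurableSet.univ hB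
    simpa using this
  have hκΦ : κ ∘ Φ = ψ := by
    rw [hΦdef, ← Function.comp_assoc, hκκ, Function.id_comp]
  have hψpres : ∀ B : Set E, MeasurableSet B → μ (ψ ⁻¹' B) = μ B := by
    intro B hB
    have h1 : ψ ⁻¹' B = Φ ⁻¹' (κ ⁻¹' B) := by
      rw [← hκΦ]; rfl
    rw [h1, hΦpres _ (hκ_meas hB), hκpres _ hB]
  have hmapψ : Measure.map ψ μ = μ :=
    Measure.ext fun s hs => by rw [Measure.map_apply hψ_meas hs]; exact hψpres s hs
  -- p ∘ Φ = p a.e.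
  have haeκψ : ∀ᵐ x ∂μ, p (κ (ψ x)) = p (ψ x) := by
    have hs : MeasurableSet {y | p (κ y) = p y} :=
      measurableSet_eq_fun (hp_meas.comp hκ_meas) hp_meas
    have h1 : ∀ᵐ y ∂(Measure.map ψ μ), p (κ y) = p y := by rw [hmapψ]; exact hpκ
    exact (ae_map_iff hψ_meas.aemeasurable hs).mp h1
  have haeΦ : ∀ᵐ x ∂μ, p (Φ x) = p x := by
    filter_upwards [haeκψ, hpψ] with x h1 h2
    simpa [hΦdef] using h1.trans h2
  -- map of restricted measure
  have hmap : ∀ A : Set E, MeasurableSet A →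
      Measure.map Φ (μ.restrict A) = μ.restrict (Φ ⁻¹' A) := by
    intro A hA
    refine Measure.ext fun B hB => ?_
    rw [Measure.map_apply hΦ_meas hB, Measure.restrict_apply hB,
      Measure.restrict_apply (hΦ_meas hB), Set.inter_comm (Φ ⁻¹' B)]
    exact hψ A B hA hB
  have hν : μ.withDensity p = ν := Measure.withDensity_rnDeriv_eq ν μ hac
  -- main computation
  intro A B hA hB
  have key : ∀ S T : Set E, MeasurableSet S → MeasurableSet T →
      ν (S ∩ Φ ⁻¹' T) = ∫⁻ x in S, (T.indicator p) (Φ x) ∂μ := by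
    intro S T hS hT
    rw [← hν, withDensity_apply _ (hS.inter (hΦ_meas hT))]
    have hind : ∀ x, (T.indicator p) (Φ x) = (Φ ⁻¹' T).indicator (fun y => p (Φ y)) x := by
      intro x
      by_cases h : Φ x ∈ T <;> simp [Set.indicator, h]
    calc ∫⁻ x in S ∩ Φ ⁻¹' T, p x ∂μ
        = ∫⁻ x in S, (Φ ⁻¹' T).indicator p x ∂μ := by
          rw [lintegral_indicator (hΦ_meas hT) _, Measure.restrict_restrict (hΦ_meas hT),
            Set.inter_comm]
      _ = ∫⁻ x in S, (Φ ⁻¹' T).indicator (fun y => p (Φ y)) x ∂μ := by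
          refine lintegral_congr_ae ?_
          filter_upwards [ae_restrict_of_ae haeΦ] with x hx
          by_cases h : x ∈ Φ ⁻¹' T <;> simp [Set.indicator, h, hx]
      _ = ∫⁻ x in S, (T.indicator p) (Φ x) ∂μ := by
          refine lintegral_congr fun x => (hind x).symm
  rw [key A B hA hB, key B A hB hA]
  calc ∫⁻ x in A, (B.indicator p) (Φ x) ∂μ
      = ∫⁻ y, B.indicator p y ∂(Measure.map Φ (μ.restrict A)) := by
        rw [lintegral_map (hp_meas.indicator hB) hΦ_meas]
    _ = ∫⁻ y in Φ ⁻¹' A, B.indicator p y ∂μ := by rw [hmap A hA]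
    _ = ∫⁻ y, (Φ ⁻¹' A).indicator (B.indicator p) y ∂μ := by
        rw [lintegral_indicator (hΦ_meas hA) _]
    _ = ∫⁻ y, (B.indicator ((Φ ⁻¹' A).indicator p)) y ∂μ := by
        refine lintegral_congr fun y => ?_
        by_cases h1 : y ∈ Φ ⁻¹' A <;> by_cases h2 : y ∈ B <;>
          simp [Set.indicator, h1, h2]
    _ = ∫⁻ y in B, (Φ ⁻¹' A).indicator p y ∂μ := by
        rw [lintegral_indicator hB _]
    _ = ∫⁻ y in B, (A.indicator p) (Φ y) ∂μ := by
        refine lintegral_congr_ae ?_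
        filter_upwards [ae_restrict_of_ae haeΦ] with y hy
        by_cases h : Φ y ∈ A <;> simp [Set.indicator, h, hy]
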